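/- Let G be the triangle on vertices a, b, c, with edge ideal I = (ab, bc, ca), and let t ≥ 1. Then the minimal generating set of I^t is exactly { a^α b^β c^γ : α + β + γ = 2t and 0 ≤ α, β, γ ≤ t }, this set has binom(t+2, 2) elements, and no Scarf face of I^t contains two distinct minimal generators; thus the Scarf complex of I^t consists precisely of the empty set and the singletons (a set of binom(t+2,2) isolated vertices). -/

import Mathlib

/-- The monomial (exponent vector) of an edge: `1` on its endpoints, `0` elsewhere. -/
def edgeMon {V : Type*} [DecidableEq V] (e : Sym2 V) : V → ℕ :=
  fun x => if x ∈ e then 1 else 0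

/-- The lcm (componentwise max) of the monomials of a finite set of edges. -/
def eLcm {V : Type*} [DecidableEq V] (σ : Finset (Sym2 V)) : V → ℕ :=
  σ.sup edgeMon

/-- `σ` is a Scarf face of the edge ideal `I(G)`, identified with a set of edges of `G`:
its lcm is distinct from the lcm of any other set of edges of `G`. -/
def IsScarf {V : Type*} [DecidableEq V] (G : SimpleGraph V) (σ : Finset (Sym2 V)) : Prop :=
  (∀ e ∈ σ, e ∈ G.edgeSet) ∧
    ∀ τ : Finset (Sym2 V), (∀ e ∈ τ, e ∈ G.edgeSet) → eLcm τ = eLcm σ → τ = σ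

/-- `dist_G(e, f) = 0`: the two edges share a vertex. -/
def Dist0 {V : Type*} (e f : Sym2 V) : Prop := ∃ x, x ∈ e ∧ x ∈ f

/-- `dist_G(e, f) = 1`: the edges are vertex-disjoint, but some endpoint of `e` is
adjacent in `G` to some endpoint of `f`. -/
def Dist1 {V : Type*} (G : SimpleGraph V) (e f : Sym2 V) : Prop :=
  ¬ Dist0 e f ∧ ∃ x ∈ e, ∃ y ∈ f, G.Adj x y

/-- Componentwise lcm (sup) of a finite set of exponent vectors. -/
def mLcm {V : Type*} (σ : Finset (V → ℕ)) : V → ℕ := σ.sup id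

/-- `m` is a sum of `t` edge monomials of `G`, i.e. a generator of `I(G)^t`. -/
def IsEdgeSum {V : Type*} [DecidableEq V] (G : SimpleGraph V) (t : ℕ) (m : V → ℕ) : Prop :=
  ∃ s : Multiset (Sym2 V), (∀ e ∈ s, e ∈ G.edgeSet) ∧ Multiset.card s = t ∧
    (s.map edgeMon).sum = m

/-- `m` is a minimal generator of `I(G)^t`: it is a sum of `t` edge monomials of `G`,
minimal with respect to componentwise `≤` among all such sums. -/
def IsMinGen {V : Type*} [DecidableEq V] (G : SimpleGraph V) (t : ℕ) (m : V → ℕ) : Prop :=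
  IsEdgeSum G t m ∧ ∀ m', IsEdgeSum G t m' → m' ≤ m → m' = m

/-- `σ` is a Scarf face of `I(G)^t`: a set of minimal generators of `I(G)^t` whose lcm
is distinct from the lcm of any other set of minimal generators of `I(G)^t`. -/
def IsScarfPow {V : Type*} [DecidableEq V] (G : SimpleGraph V) (t : ℕ)
    (σ : Finset (V → ℕ)) : Prop :=
  (∀ m ∈ σ, IsMinGen G t m) ∧
    ∀ τ : Finset (V → ℕ), (∀ m ∈ τ, IsMinGen G t m) → mLcm τ = mLcm σ → τ = σ

/-- The triangle on vertices `a = 0`, `b = 1`, `c = 2`. -/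
def triangleG : SimpleGraph (Fin 3) := ⊤

lemma msum_apply {V : Type*} (s : Multiset (V → ℕ)) (i : V) :
    s.sum i = (s.map (fun f => f i)).sum := by
  induction s using Multiset.induction with
  | empty => simp
  | cons a s ih => simp [ih]

lemma edge_sum3 : ∀ e : Sym2 (Fin 3), ¬ e.IsDiag →
    edgeMon e 0 + edgeMon e 1 + edgeMon e 2 = 2 := by
  decide

lemma isEdgeSum_iff (t : ℕ) (m : Fin 3 → ℕ) :
    IsEdgeSum triangleG t m ↔
      (m 0 + m 1 + m 2 = 2 * t ∧ m 0 ≤ t ∧ m 1 ≤ t ∧ m 2 ≤ t) := by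
  constructor
  · rintro ⟨s, hs, hcard, hsum⟩
    have hdiag : ∀ e ∈ s, ¬ e.IsDiag := by
      intro e he
      have := hs e he
      rwa [triangleG, SimpleGraph.edgeSet_top, Set.mem_compl_iff, Sym2.mem_diagSet] at this
    have hmi : ∀ i : Fin 3, m i = (s.map (fun e => edgeMon e i)).sum := by
      intro i
      rw [← hsum, msum_apply, Multiset.map_map]
      rfl
    have hle : ∀ i : Fin 3, m i ≤ t := by
      intro i
      rw [hmi i]
      calc (s.map (fun e => edgeMon e i)).sum
          ≤ Multiset.card (s.map (fun e => edgeMon e i)) • 1 := by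
            apply Multiset.sum_le_card_nsmul
            intro x hx
            obtain ⟨e, _, rfl⟩ := Multiset.mem_map.mp hx
            unfold edgeMon; split <;> simp
        _ = t := by simp [hcard]
    refine ⟨?_, hle 0, hle 1, hle 2⟩
    rw [hmi 0, hmi 1, hmi 2, ← Multiset.sum_map_add, ← Multiset.sum_map_add]
    have : (s.map fun e => edgeMon e 0 + edgeMon e 1 + edgeMon e 2) = s.map (fun _ => 2) := by
      apply Multiset.map_congr rfl
      intro e he
      exact edge_sum3 e (hdiag e he)
    rw [this, Multiset.map_const', Multiset.sum_replicate, hcard, smul_eq_mul]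
    omega
  · rintro ⟨hsum, h0, h1, h2⟩
    refine ⟨Multiset.replicate (t - m 2) s(0,1) + Multiset.replicate (t - m 0) s(1,2)
      + Multiset.replicate (t - m 1) s(0,2), ?_, ?_, ?_⟩
    · intro e he
      rw [triangleG, SimpleGraph.edgeSet_top, Set.mem_compl_iff, Sym2.mem_diagSet]
      simp only [Multiset.mem_add, Multiset.mem_replicate] at he
      rcases he with (⟨_, rfl⟩ | ⟨_, rfl⟩) | ⟨_, rfl⟩ <;> decide
    · simp only [Multiset.card_add, Multiset.card_replicate]
      omega
    · funext i
      rw [msum_apply, Multiset.map_map]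
      simp only [Multiset.map_add, Multiset.map_replicate, Multiset.sum_add,
        Multiset.sum_replicate, smul_eq_mul, Function.comp_apply]
      fin_cases i <;> simp [edgeMon, Sym2.mem_iff] <;> omega

lemma isMinGen_iff (t : ℕ) (m : Fin 3 → ℕ) : IsMinGen triangleG t m ↔
    (m 0 + m 1 + m 2 = 2 * t ∧ m 0 ≤ t ∧ m 1 ≤ t ∧ m 2 ≤ t) := by
  constructor
  · intro h
    exact (isEdgeSum_iff t m).mp h.1
  · intro h
    refine ⟨(isEdgeSum_iff t m).mpr (by omega), ?_⟩
    intro m' hm' hle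
    rw [isEdgeSum_iff] at hm'
    rw [Pi.le_def] at hle
    have h0 := hle 0
    have h1 := hle 1
    have h2 := hle 2
    funext i
    fin_cases i
    · show m' 0 = m 0; omega
    · show m' 1 = m 1; omega
    · show m' 2 = m 2; omega

lemma count_lemma (t : ℕ) :
    {m : Fin 3 → ℕ | m 0 + m 1 + m 2 = 2*t ∧ m 0 ≤ t ∧ m 1 ≤ t ∧ m 2 ≤ t}.ncard
      = Nat.choose (t+2) 2 := by
  classical
  set D : Finset ((_ : ℕ) × ℕ) := (Finset.range (t+1)).sigma fun a => Finset.range (a+1) with hD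
  set F : (_ : ℕ) × ℕ → (Fin 3 → ℕ) := fun p => ![p.1, t - p.1 + p.2, t - p.2] with hF
  have hset : {m : Fin 3 → ℕ | m 0 + m 1 + m 2 = 2*t ∧ m 0 ≤ t ∧ m 1 ≤ t ∧ m 2 ≤ t}
      = ↑(D.image F) := by
    ext m
    simp only [Finset.coe_image, Set.mem_image, Finset.mem_coe, hD, Finset.mem_sigma,
      Finset.mem_range, Set.mem_setOf_eq, hF]
    constructor
    · rintro ⟨h, h0, h1, h2⟩
      refine ⟨⟨m 0, m 0 + m 1 - t⟩, ⟨by dsimp only; omega, by dsimp only; omega⟩, ?_⟩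
      funext i; fin_cases i <;> simp <;> omega
    · rintro ⟨⟨a, j⟩, ⟨ha, hj⟩, rfl⟩
      dsimp only at ha hj ⊢
      refine ⟨?_, ?_, ?_, ?_⟩ <;> simp <;> omega
  rw [hset, Set.ncard_coe_finset]
  have hinj : Set.InjOn F ↑D := by
    rintro ⟨a, j⟩ h1 ⟨a', j'⟩ h2 heq
    simp only [Finset.mem_coe, hD, Finset.mem_sigma, Finset.mem_range] at h1 h2
    have e0 := congrFun heq 0
    have e1 := congrFun heq 1
    simp [hF] at e0 e1
    subst e0
    simp only [Sigma.mk.inj_iff, heq_eq_eq, true_and]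
    omega
  rw [Finset.card_image_of_injOn hinj, hD, Finset.card_sigma]
  simp only [Finset.card_range]
  have key : ∀ n : ℕ, 2 * ∑ a ∈ Finset.range n, (a+1) = n * (n+1) := by
    intro n
    induction n with
    | zero => simp
    | succ k ih => rw [Finset.sum_range_succ, Nat.mul_add, ih]; ring
  have hk := key (t+1)
  rw [Nat.choose_two_right]
  have h2 : (t+2) * (t+2-1) = (t+1) * (t+1+1) := by rw [show t+2-1 = t+1 by omega]; ring
  omega

lemma scarf_iff (t : ℕ) (ht : 1 ≤ t) (σ : Finset (Fin 3 → ℕ)) :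
    IsScarfPow triangleG t σ ↔ (σ = ∅ ∨ ∃ m, IsMinGen triangleG t m ∧ σ = {m}) := by
  classical
  constructor
  · rintro ⟨hmem, huniq⟩
    by_contra hcon
    push_neg at hcon
    obtain ⟨hne, hns⟩ := hcon
    -- σ has two distinct elements
    obtain ⟨m, hmσ⟩ := hne
    have hm := hmem m hmσ
    obtain ⟨m', hm'σ, hmm'⟩ : ∃ m' ∈ σ, m' ≠ m := by
      by_contra h
      push_neg at h
      exact hns m hm ((Finset.eq_singleton_iff_unique_mem).mpr ⟨hmσ, h⟩)
    have hm' := hmem m' hm'σ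
    set L : Fin 3 → ℕ := mLcm σ with hL
    have hfle : ∀ f ∈ σ, ∀ i, f i ≤ L i := fun f hf i => Finset.le_sup (f := id) hf i
    have hLt : ∀ i, L i ≤ t := by
      intro i
      rw [hL, mLcm, Finset.sup_apply]
      apply Finset.sup_le
      intro f hf
      have := (isMinGen_iff t f).mp (hmem f hf)
      fin_cases i <;> simp <;> omega
    have hmc := (isMinGen_iff t m).mp hm
    have hm'c := (isMinGen_iff t m').mp hm'
    have hdiff : m 0 ≠ m' 0 ∨ m 1 ≠ m' 1 ∨ m 2 ≠ m' 2 := by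
      by_contra h
      push_neg at h
      exact hmm' (funext fun i => by fin_cases i <;> simp [h.1, h.2.1, h.2.2]).symm
    have hm0 := hfle m hmσ 0
    have hm1 := hfle m hmσ 1
    have hm2 := hfle m hmσ 2
    have hm'0 := hfle m' hm'σ 0
    have hm'1 := hfle m' hm'σ 1
    have hm'2 := hfle m' hm'σ 2
    have hL0 := hLt 0
    have hL1 := hLt 1
    have hL2 := hLt 2
    set d : ℕ := L 0 + L 1 + L 2 - 2 * t with hd
    have hd1 : 1 ≤ d := by rcases hdiff with h | h | h <;> omega
    have hdL : d ≤ L 0 ∧ d ≤ L 1 ∧ d ≤ L 2 := by omega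
    set g0 : Fin 3 → ℕ := Function.update L 0 (L 0 - d) with hg0
    set g1 : Fin 3 → ℕ := Function.update L 1 (L 1 - d) with hg1
    set g2 : Fin 3 → ℕ := Function.update L 2 (L 2 - d) with hg2
    have hg0v : g0 0 = L 0 - d ∧ g0 1 = L 1 ∧ g0 2 = L 2 := by
      refine ⟨?_, ?_, ?_⟩ <;> simp [hg0, Function.update_apply]
    have hg1v : g1 0 = L 0 ∧ g1 1 = L 1 - d ∧ g1 2 = L 2 := by
      refine ⟨?_, ?_, ?_⟩ <;> simp [hg1, Function.update_apply]
    have hg2v : g2 0 = L 0 ∧ g2 1 = L 1 ∧ g2 2 = L 2 - d := by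
      refine ⟨?_, ?_, ?_⟩ <;> simp [hg2, Function.update_apply]
    have hg0gen : IsMinGen triangleG t g0 := (isMinGen_iff t g0).mpr (by omega)
    have hg1gen : IsMinGen triangleG t g1 := (isMinGen_iff t g1).mpr (by omega)
    have hg2gen : IsMinGen triangleG t g2 := (isMinGen_iff t g2).mpr (by omega)
    set τ₁ : Finset (Fin 3 → ℕ) := insert g0 (insert g1 (insert g2 σ)) with hτ₁
    set τ₂ : Finset (Fin 3 → ℕ) := τ₁.erase g0 with hτ₂
    have hστ₁ : σ ⊆ τ₁ := by
      intro f hf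
      simp [hτ₁, hf]
    have hτ₁mem : ∀ f ∈ τ₁, IsMinGen triangleG t f := by
      intro f hf
      simp only [hτ₁, Finset.mem_insert] at hf
      rcases hf with rfl | rfl | rfl | hf
      · exact hg0gen
      · exact hg1gen
      · exact hg2gen
      · exact hmem f hf
    have hgleL : ∀ f ∈ τ₁, f ≤ L := by
      intro f hf
      simp only [hτ₁, Finset.mem_insert] at hf
      rcases hf with rfl | rfl | rfl | hf
      · intro i; fin_cases i <;> simp <;> omega
      · intro i; fin_cases i <;> simp <;> omega
      · intro i; fin_cases i <;> simp <;> omega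
      · exact Finset.le_sup (f := id) hf
    have hlcm1 : mLcm τ₁ = L := by
      apply le_antisymm
      · exact Finset.sup_le hgleL
      · rw [hL]
        exact Finset.sup_mono hστ₁
    have hg1ne0 : g1 ≠ g0 := by
      intro h
      have := congrFun h 0
      omega
    have hg2ne0 : g2 ≠ g0 := by
      intro h
      have := congrFun h 0
      omega
    have hg1τ₂ : g1 ∈ τ₂ := Finset.mem_erase.mpr ⟨hg1ne0, by simp [hτ₁]⟩
    have hg2τ₂ : g2 ∈ τ₂ := Finset.mem_erase.mpr ⟨hg2ne0, by simp [hτ₁]⟩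
    have hlcm2 : mLcm τ₂ = L := by
      apply le_antisymm
      · exact Finset.sup_le (fun f hf => hgleL f (Finset.erase_subset _ _ hf))
      · have h1 : g1 ≤ mLcm τ₂ := Finset.le_sup (f := id) hg1τ₂
        have h2 : g2 ≤ mLcm τ₂ := Finset.le_sup (f := id) hg2τ₂
        intro i
        have h1i := h1 i
        have h2i := h2 i
        fin_cases i <;> simp at h1i h2i ⊢ <;> omega
    have e1 : τ₁ = σ := huniq τ₁ hτ₁mem (by rw [hlcm1, hL])
    have e2 : τ₂ = σ := huniq τ₂ (fun f hf => hτ₁mem f (Finset.erase_subset _ _ hf))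
      (by rw [hlcm2, hL])
    have : g0 ∈ σ := e1 ▸ (Finset.mem_insert_self g0 _)
    have : g0 ∉ σ := e2 ▸ (Finset.notMem_erase g0 τ₁)
    exact this ‹g0 ∈ σ›
  · rintro (rfl | ⟨m, hm, rfl⟩)
    · refine ⟨by simp, ?_⟩
      intro τ hτ hlcm
      rw [Finset.eq_empty_iff_forall_notMem]
      intro f hf
      have hle : f ≤ mLcm τ := Finset.le_sup (f := id) hf
      have hc := (isMinGen_iff t f).mp (hτ f hf)
      rw [hlcm] at hle
      have h0 := hle 0
      have h1 := hle 1
      have h2 := hle 2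
      simp [mLcm] at h0 h1 h2
      omega
    · refine ⟨by simpa using hm, ?_⟩
      intro τ hτ hlcm
      have hlcms : mLcm {m} = m := by simp [mLcm]
      rw [hlcms] at hlcm
      have hmc := (isMinGen_iff t m).mp hm
      have hsub : τ ⊆ {m} := by
        intro f hf
        have hle : f ≤ m := hlcm ▸ Finset.le_sup (f := id) hf
        have hc := (isMinGen_iff t f).mp (hτ f hf)
        rw [Pi.le_def] at hle
        have h0 := hle 0
        have h1 := hle 1
        have h2 := hle 2
        rw [Finset.mem_singleton]
        funext i
        fin_cases i
        · show f 0 = m 0; omega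
        · show f 1 = m 1; omega
        · show f 2 = m 2; omega
      rcases Finset.subset_singleton_iff.mp hsub with rfl | h
      · exfalso
        have : mLcm (∅ : Finset (Fin 3 → ℕ)) = m := hlcm
        have h0 := congrFun this 0
        have h1 := congrFun this 1
        simp [mLcm] at h0 h1
        omega
      · exact h

theorem stmt16 (t : ℕ) (ht : 1 ≤ t) :
    (∀ m : Fin 3 → ℕ, IsMinGen triangleG t m ↔
        (m 0 + m 1 + m 2 = 2 * t ∧ m 0 ≤ t ∧ m 1 ≤ t ∧ m 2 ≤ t)) ∧
    {m : Fin 3 → ℕ | IsMinGen triangleG t m}.ncard = Nat.choose (t + 2) 2 ∧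
    (∀ σ : Finset (Fin 3 → ℕ), IsScarfPow triangleG t σ ↔
        (σ = ∅ ∨ ∃ m, IsMinGen triangleG t m ∧ σ = {m})) := by
  refine ⟨fun m => isMinGen_iff t m, ?_, fun σ => scarf_iff t ht σ⟩
  have : {m : Fin 3 → ℕ | IsMinGen triangleG t m}
      = {m : Fin 3 → ℕ | m 0 + m 1 + m 2 = 2*t ∧ m 0 ≤ t ∧ m 1 ≤ t ∧ m 2 ≤ t} := by
    ext m
    exact isMinGen_iff t m
  rw [this]
  exact count_lemma t
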